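/- Let F be a Borel probability measure on [0,1], let θ₁, θ₂ > 0 and θ = θ₁ + θ₂, and define the operator L on C²([0,1]) by L g(x) = (1/2) x(1−x) E[ g''( x(1−W)+WV ) ] + (1/2)(θ₁ − θx) g'(x). Then for every integer n ≥ 1 there exists a polynomial P_n of degree exactly n such that for all x ∈ [0,1]: L P_n(x) = −λ_n P_n(x), where λ_n = (n/2) ( (n−1) E[ (1−W)^{n−2} ] + θ ). -/

import Mathlib

open MeasureTheory Set

/-- The two-type Λ-Fleming-Viot generator with parent-independent mutation,
`L g(x) = (1/2) x(1-x) E[g''(x(1-W)+WV)] + (1/2)(θ₁ - θ x) g'(x)`,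
where `W = U⬝Y`, `Y ∼ F`, `U` with density `2u` on `(0,1)`, `V` uniform on `(0,1)`. -/
noncomputable def Lop (F : Measure ℝ) (θ₁ θ₂ : ℝ) (g : ℝ → ℝ) (x : ℝ) : ℝ :=
  (1/2) * x * (1 - x) *
    (∫ y, (∫ u in Set.Ioo (0:ℝ) 1, (∫ v in Set.Ioo (0:ℝ) 1,
      deriv (deriv g) (x * (1 - u * y) + u * y * v)) * (2 * u)) ∂F)
  + (1/2) * (θ₁ - (θ₁ + θ₂) * x) * deriv g x

/-- `E[(1-W)^j]` where `W = U⬝Y`. -/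
noncomputable def expMom (F : Measure ℝ) (j : ℕ) : ℝ :=
  ∫ y, (∫ u in Set.Ioo (0:ℝ) 1, (1 - u * y) ^ j * (2 * u)) ∂F

set_option linter.unusedSectionVars false
set_option maxHeartbeats 1000000

namespace Stmt10Aux

open Polynomial intervalIntegral

lemma intIoo {f : ℝ → ℝ} (hf : Continuous f) : IntegrableOn f (Ioo (0:ℝ) 1) volume :=
  (hf.integrableOn_Icc (a := 0) (b := 1)).mono_set Ioo_subset_Icc_self

lemma int_Ioo_eq (f : ℝ → ℝ) : ∫ x in Ioo (0:ℝ) 1, f x = ∫ x in (0:ℝ)..1, f x := by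
  rw [intervalIntegral.integral_of_le zero_le_one, integral_Ioc_eq_integral_Ioo]

lemma int_pow_Ioo (i : ℕ) : ∫ v in Ioo (0:ℝ) 1, v^i = 1/((i:ℝ)+1) := by
  rw [int_Ioo_eq, integral_pow]; simp

lemma lemV (k : ℕ) (a b : ℝ) :
    ∫ v in Ioo (0:ℝ) 1, (a + b*v)^k
      = ∑ i ∈ Finset.range (k+1), (k.choose i : ℝ) * a^(k-i) * b^i * (1/((i:ℝ)+1)) := by
  have h : ∀ v : ℝ, (a + b*v)^k
      = ∑ i ∈ Finset.range (k+1), ((k.choose i : ℝ) * a^(k-i) * b^i) * v^i := by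
    intro v
    rw [add_comm, add_pow]
    refine Finset.sum_congr rfl fun i hi => ?_
    ring
  simp only [h]
  rw [MeasureTheory.integral_finset_sum _ (fun i _ => (intIoo (continuous_pow i)).const_mul _)]
  refine Finset.sum_congr rfl fun i hi => ?_
  rw [MeasureTheory.integral_const_mul, int_pow_Ioo]

lemma lemU (m i : ℕ) (y : ℝ) :
    ∫ u in Ioo (0:ℝ) 1, (1 - u*y)^m * (u*y)^i * (2*u)
      = ∑ l ∈ Finset.range (m+1), (m.choose l : ℝ) * (-1)^l * y^(l+i) * (2/((l:ℝ)+(i:ℝ)+2)) := by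
  have h : ∀ u : ℝ, (1 - u*y)^m * (u*y)^i * (2*u)
      = ∑ l ∈ Finset.range (m+1), ((m.choose l : ℝ) * (-1)^l * y^(l+i) * 2) * u^(l+i+1) := by
    intro u
    have h1 : (1 - u*y)^m = ∑ l ∈ Finset.range (m+1), ((m.choose l:ℝ) * (-1)^l * y^l) * u^l := by
      rw [sub_eq_add_neg, add_comm, add_pow]
      refine Finset.sum_congr rfl fun l hl => ?_
      rw [neg_pow (u*y)]
      ring
    rw [h1, Finset.sum_mul, Finset.sum_mul]
    refine Finset.sum_congr rfl fun l hl => ?_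
    rw [pow_add y l i, pow_add u (l+i) 1, pow_add u l i, mul_pow]
    ring
  simp only [h]
  rw [MeasureTheory.integral_finset_sum _ (fun l _ => (intIoo (continuous_pow _)).const_mul _)]
  refine Finset.sum_congr rfl fun l hl => ?_
  rw [MeasureTheory.integral_const_mul, int_pow_Ioo]
  push_cast
  ring


variable {F : Measure ℝ} [IsProbabilityMeasure F]

lemma aeIcc (hF : F (Set.Icc (0:ℝ) 1)ᶜ = 0) : ∀ᵐ y ∂F, y ∈ Icc (0:ℝ) 1 := by
  have h := MeasureTheory.measure_eq_zero_iff_ae_notMem.mp hF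
  simpa [not_not] using h

lemma intF (hF : F (Set.Icc (0:ℝ) 1)ᶜ = 0) (m : ℕ) : Integrable (fun y : ℝ => y ^ m) F := by
  refine Integrable.mono' (integrable_const 1) ((continuous_pow m).aestronglyMeasurable) ?_
  filter_upwards [aeIcc hF] with y hy
  have h1 : |y| ≤ 1 := abs_le.2 ⟨by linarith [hy.1], hy.2⟩
  calc ‖y^m‖ = |y|^m := by rw [Real.norm_eq_abs, abs_pow]
  _ ≤ 1 := pow_le_one₀ (abs_nonneg y) h1

/-- the `u`-integral as an explicit polynomial expression in `y` -/
lemma gfun_eq (m : ℕ) :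
    (fun y : ℝ => ∫ u in Ioo (0:ℝ) 1, (1 - u*y)^m * (2*u))
      = fun y : ℝ => ∑ l ∈ Finset.range (m+1),
          (m.choose l : ℝ) * (-1)^l * (2/((l:ℝ)+2)) * y^l := by
  funext y
  have h : ∀ u : ℝ, (1 - u*y)^m * (2*u) = (1 - u*y)^m * (u*y)^0 * (2*u) := by
    intro u; ring
  simp only [h]
  rw [lemU m 0 y]
  refine Finset.sum_congr rfl fun l hl => ?_
  push_cast
  ring_nf

lemma gInt (hF : F (Set.Icc (0:ℝ) 1)ᶜ = 0) (m : ℕ) :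
    Integrable (fun y : ℝ => ∫ u in Ioo (0:ℝ) 1, (1 - u*y)^m * (2*u)) F := by
  rw [gfun_eq]
  exact integrable_finset_sum _ (fun l _ => (intF hF l).const_mul _)

lemma expMom_expand (hF : F (Set.Icc (0:ℝ) 1)ᶜ = 0) (k : ℕ) :
    expMom F k = ∑ l ∈ Finset.range (k+1),
      (k.choose l : ℝ) * (-1)^l * (2/((l:ℝ)+2)) * (∫ y, y^l ∂F) := by
  unfold expMom
  rw [show (fun y : ℝ => ∫ u in Set.Ioo (0:ℝ) 1, (1 - u * y) ^ k * (2 * u))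
      = fun y : ℝ => ∑ l ∈ Finset.range (k+1),
          (k.choose l : ℝ) * (-1)^l * (2/((l:ℝ)+2)) * y^l from gfun_eq k]
  rw [MeasureTheory.integral_finset_sum _ (fun l _ => (intF hF l).const_mul _)]
  refine Finset.sum_congr rfl fun l hl => ?_
  rw [MeasureTheory.integral_const_mul]

/-- the full `(u,v)`-double integral as an explicit expression -/
lemma ufun_eq (k : ℕ) (x y : ℝ) :
    ∫ u in Ioo (0:ℝ) 1, (∫ v in Ioo (0:ℝ) 1, (x*(1-u*y)+u*y*v)^k) * (2*u)
    = ∑ i ∈ Finset.range (k+1), ∑ l ∈ Finset.range (k-i+1),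
       (k.choose i : ℝ) * ((k-i).choose l : ℝ) * (-1)^l * (1/((i:ℝ)+1))
         * (2/((l:ℝ)+(i:ℝ)+2)) * y^(l+i) * x^(k-i) := by
  have h : ∀ u : ℝ, (∫ v in Ioo (0:ℝ) 1, (x*(1-u*y)+u*y*v)^k) * (2*u)
      = ∑ i ∈ Finset.range (k+1),
          ((k.choose i : ℝ) * x^(k-i) * (1/((i:ℝ)+1))) * ((1-u*y)^(k-i) * (u*y)^i * (2*u)) := by
    intro u
    rw [lemV k (x*(1-u*y)) (u*y), Finset.sum_mul]
    refine Finset.sum_congr rfl fun i _ => ?_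
    rw [mul_pow]
    ring
  simp only [h]
  rw [MeasureTheory.integral_finset_sum _ (fun i _ => (intIoo (by fun_prop)).const_mul _)]
  refine Finset.sum_congr rfl fun i _ => ?_
  rw [MeasureTheory.integral_const_mul, lemU (k-i) i y, Finset.mul_sum]
  refine Finset.sum_congr rfl fun l _ => ?_
  ring

noncomputable def phi (F : Measure ℝ) (k : ℕ) : Polynomial ℝ :=
  ∑ i ∈ Finset.range (k+1), ∑ l ∈ Finset.range (k-i+1),
    Polynomial.C ((k.choose i : ℝ) * ((k-i).choose l : ℝ) * (-1)^l * (1/((i:ℝ)+1))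
      * (2/((l:ℝ)+(i:ℝ)+2)) * (∫ y, y^(l+i) ∂F)) * X^(k-i)

lemma psi_integrable (hF : F (Set.Icc (0:ℝ) 1)ᶜ = 0) (k : ℕ) (x : ℝ) :
    Integrable (fun y : ℝ => ∑ i ∈ Finset.range (k+1), ∑ l ∈ Finset.range (k-i+1),
       (k.choose i : ℝ) * ((k-i).choose l : ℝ) * (-1)^l * (1/((i:ℝ)+1))
         * (2/((l:ℝ)+(i:ℝ)+2)) * y^(l+i) * x^(k-i)) F := by
  refine integrable_finset_sum _ (fun i _ => integrable_finset_sum _ (fun l _ => ?_))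
  exact ((intF hF (l+i)).const_mul _).mul_const _

lemma psi_int (hF : F (Set.Icc (0:ℝ) 1)ᶜ = 0) (k : ℕ) (x : ℝ) :
    (∫ y, (∑ i ∈ Finset.range (k+1), ∑ l ∈ Finset.range (k-i+1),
       (k.choose i : ℝ) * ((k-i).choose l : ℝ) * (-1)^l * (1/((i:ℝ)+1))
         * (2/((l:ℝ)+(i:ℝ)+2)) * y^(l+i) * x^(k-i)) ∂F) = (phi F k).eval x := by
  rw [MeasureTheory.integral_finset_sum _
    (fun i _ => integrable_finset_sum _ (fun l _ => ((intF hF (l+i)).const_mul _).mul_const _))]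
  unfold phi
  rw [eval_finset_sum]
  refine Finset.sum_congr rfl fun i _ => ?_
  rw [MeasureTheory.integral_finset_sum _
    (fun l _ => ((intF hF (l+i)).const_mul _).mul_const _), eval_finset_sum]
  refine Finset.sum_congr rfl fun l _ => ?_
  rw [MeasureTheory.integral_mul_const, MeasureTheory.integral_const_mul]
  simp [mul_assoc, mul_comm, mul_left_comm]

noncomputable def Ipoly (F : Measure ℝ) : Polynomial ℝ →ₗ[ℝ] Polynomial ℝ where
  toFun Q := Q.sum fun k a => Polynomial.C a * phi F k
  map_add' p q := Polynomial.sum_add_index p q _ (fun i => by simp)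
    (fun a b₁ b₂ => by rw [C_add, add_mul])
  map_smul' c p := by
    show ((c • p).sum fun k a => Polynomial.C a * phi F k)
        = c • (p.sum fun k a => Polynomial.C a * phi F k)
    rw [Polynomial.sum_smul_index _ _ _ (fun i => by simp), Polynomial.sum_def,
      Polynomial.sum_def, Finset.smul_sum]
    refine Finset.sum_congr rfl fun k _ => ?_
    rw [smul_eq_C_mul, C_mul, mul_assoc]

lemma Ipoly_monomial (a : ℝ) (m : ℕ) : Ipoly F (Polynomial.C a * X^m) = Polynomial.C a * phi F m := by
  show ((Polynomial.C a * X^m).sum fun k b => Polynomial.C b * phi F k) = _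
  rw [C_mul_X_pow_eq_monomial, Polynomial.sum_monomial_index _ _ (by simp)]

noncomputable def LPlin (F : Measure ℝ) (θ₁ θ₂ : ℝ) : Polynomial ℝ →ₗ[ℝ] Polynomial ℝ :=
  ((LinearMap.mulLeft ℝ (Polynomial.C (1/2 : ℝ) * (X - X^2))).comp
    ((Ipoly F).comp ((Polynomial.derivative (R := ℝ)).comp (Polynomial.derivative (R := ℝ)))))
  + ((LinearMap.mulLeft ℝ (Polynomial.C (1/2 : ℝ)
      * (Polynomial.C θ₁ - Polynomial.C (θ₁+θ₂) * X))).comp (Polynomial.derivative (R := ℝ)))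

lemma LPlin_apply (θ₁ θ₂ : ℝ) (P : Polynomial ℝ) :
    LPlin F θ₁ θ₂ P
      = Polynomial.C (1/2 : ℝ) * (X - X^2) * Ipoly F (derivative (derivative P))
        + Polynomial.C (1/2 : ℝ) * (Polynomial.C θ₁ - Polynomial.C (θ₁+θ₂) * X) * derivative P := rfl

/-- The main integral computation: `Lop` on polynomials is `LPlin`. -/
lemma lop_eq (hF : F (Set.Icc (0:ℝ) 1)ᶜ = 0) (θ₁ θ₂ : ℝ) (P : Polynomial ℝ) (x : ℝ) :
    Lop F θ₁ θ₂ (fun t => Polynomial.eval t P) x = (LPlin F θ₁ θ₂ P).eval x := by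
  set Q := derivative (derivative P) with hQ
  have hd1 : deriv (fun t => Polynomial.eval t P) = fun t => Polynomial.eval t (derivative P) :=
    funext fun t => Polynomial.deriv P
  have hd2 : deriv (deriv (fun t => Polynomial.eval t P)) = fun t => Polynomial.eval t Q := by
    rw [hd1]; exact funext fun t => Polynomial.deriv (derivative P)
  set N := Q.natDegree + 1 with hN
  -- step 1: v-integral of eval
  have h3 : ∀ u y : ℝ, (∫ v in Ioo (0:ℝ) 1, Polynomial.eval (x*(1-u*y)+u*y*v) Q) * (2*u)
      = ∑ k ∈ Finset.range N, Q.coeff k * ((∫ v in Ioo (0:ℝ) 1, (x*(1-u*y)+u*y*v)^k) * (2*u)) := by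
    intro u y
    have he : ∀ v : ℝ, Polynomial.eval (x*(1-u*y)+u*y*v) Q
        = ∑ k ∈ Finset.range N, Q.coeff k * (x*(1-u*y)+u*y*v)^k :=
      fun v => Polynomial.eval_eq_sum_range _
    simp only [he]
    rw [MeasureTheory.integral_finset_sum _ (fun k _ => (intIoo (by fun_prop)).const_mul _),
      Finset.sum_mul]
    refine Finset.sum_congr rfl fun k _ => ?_
    rw [MeasureTheory.integral_const_mul]
    ring
  -- step 2: u-integral swap
  have h4 : ∀ y : ℝ, (∫ u in Ioo (0:ℝ) 1,
        (∫ v in Ioo (0:ℝ) 1, Polynomial.eval (x*(1-u*y)+u*y*v) Q) * (2*u))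
      = ∑ k ∈ Finset.range N, Q.coeff k *
          (∑ i ∈ Finset.range (k+1), ∑ l ∈ Finset.range (k-i+1),
            (k.choose i : ℝ) * ((k-i).choose l : ℝ) * (-1)^l * (1/((i:ℝ)+1))
              * (2/((l:ℝ)+(i:ℝ)+2)) * y^(l+i) * x^(k-i)) := by
    intro y
    simp only [h3]
    rw [MeasureTheory.integral_finset_sum _ (fun k _ => ?_)]
    · refine Finset.sum_congr rfl fun k _ => ?_
      rw [MeasureTheory.integral_const_mul, ufun_eq k x y]
    · -- integrability of u ↦ c * ((∫ v ...) * 2u)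
      have hfe : (fun u : ℝ => Q.coeff k * ((∫ v in Ioo (0:ℝ) 1, (x*(1-u*y)+u*y*v)^k) * (2*u)))
          = fun u : ℝ => Q.coeff k * ((∑ i ∈ Finset.range (k+1),
              (k.choose i : ℝ) * (x*(1-u*y))^(k-i) * (u*y)^i * (1/((i:ℝ)+1))) * (2*u)) := by
        funext u
        rw [show (∫ v in Ioo (0:ℝ) 1, (x*(1-u*y)+u*y*v)^k)
            = ∑ i ∈ Finset.range (k+1),
              (k.choose i : ℝ) * (x*(1-u*y))^(k-i) * (u*y)^i * (1/((i:ℝ)+1)) from by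
          rw [← lemV k (x*(1-u*y)) (u*y)]]
      rw [hfe]
      refine ((intIoo ?_).const_mul _)
      exact (continuous_finset_sum _ (fun i _ => by fun_prop)).mul (by fun_prop)
  -- step 3: y-integral
  have h5 : (∫ y, (∫ u in Ioo (0:ℝ) 1,
        (∫ v in Ioo (0:ℝ) 1, Polynomial.eval (x*(1-u*y)+u*y*v) Q) * (2*u)) ∂F)
      = ∑ k ∈ Finset.range N, Q.coeff k * (phi F k).eval x := by
    rw [show (fun y : ℝ => (∫ u in Ioo (0:ℝ) 1,
        (∫ v in Ioo (0:ℝ) 1, Polynomial.eval (x*(1-u*y)+u*y*v) Q) * (2*u)))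
      = fun y : ℝ => ∑ k ∈ Finset.range N, Q.coeff k *
          (∑ i ∈ Finset.range (k+1), ∑ l ∈ Finset.range (k-i+1),
            (k.choose i : ℝ) * ((k-i).choose l : ℝ) * (-1)^l * (1/((i:ℝ)+1))
              * (2/((l:ℝ)+(i:ℝ)+2)) * y^(l+i) * x^(k-i)) from funext h4]
    rw [MeasureTheory.integral_finset_sum _ (fun k _ => (psi_integrable hF k x).const_mul _)]
    refine Finset.sum_congr rfl fun k _ => ?_
    rw [MeasureTheory.integral_const_mul, psi_int hF k x]
  -- assemble
  have hIp : (Ipoly F Q).eval x = ∑ k ∈ Finset.range N, Q.coeff k * (phi F k).eval x := by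
    show (Q.sum fun k a => Polynomial.C a * phi F k).eval x = _
    rw [Polynomial.sum_over_range' Q (fun n => by simp) N (Nat.lt_succ_self _)]
    rw [eval_finset_sum]
    simp [eval_C]
  unfold Lop
  rw [hd2, hd1, h5, LPlin_apply]
  simp only [eval_add, eval_mul, eval_sub, eval_C, eval_X, eval_pow]
  rw [← hIp]
  ring

lemma phi_degree (k : ℕ) : (phi F k).degree ≤ (k : WithBot ℕ) := by
  refine le_trans (degree_sum_le _ _) (Finset.sup_le fun i _ => ?_)
  refine le_trans (degree_sum_le _ _) (Finset.sup_le fun l _ => ?_)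
  refine le_trans (degree_C_mul_X_pow_le _ _) ?_
  exact_mod_cast Nat.sub_le k i

lemma phi_coeff_top (hF : F (Set.Icc (0:ℝ) 1)ᶜ = 0) (k : ℕ) :
    (phi F k).coeff k = expMom F k := by
  unfold phi
  rw [finset_sum_coeff]
  rw [Finset.sum_eq_single 0]
  · rw [finset_sum_coeff, expMom_expand hF k]
    simp only [Nat.sub_zero, Nat.choose_zero_right, Nat.cast_one, coeff_C_mul, coeff_X_pow,
      if_pos rfl, Nat.add_zero, Nat.cast_zero]
    refine Finset.sum_congr rfl fun l _ => ?_
    push_cast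
    ring
  · intro i hi hine
    rw [finset_sum_coeff]
    refine Finset.sum_eq_zero fun l _ => ?_
    rw [coeff_C_mul, coeff_X_pow, if_neg, mul_zero]
    have hik : i ≤ k := Nat.lt_succ_iff.mp (Finset.mem_range.mp hi)
    omega
  · intro h
    exact absurd (Finset.mem_range.mpr (Nat.succ_pos k)) h

noncomputable def lam (F : Measure ℝ) (θ₁ θ₂ : ℝ) (k : ℕ) : ℝ :=
  ((k:ℝ)/2) * (((k:ℝ)-1) * expMom F (k-2) + (θ₁+θ₂))

lemma LPlin_X_pow_zero (θ₁ θ₂ : ℝ) : LPlin F θ₁ θ₂ (X^0) = 0 := by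
  rw [LPlin_apply]
  simp

lemma LPlin_X_pow_one (θ₁ θ₂ : ℝ) :
    LPlin F θ₁ θ₂ (X^1)
      = Polynomial.C (1/2 : ℝ) * (Polynomial.C θ₁ - Polynomial.C (θ₁+θ₂) * X) := by
  rw [LPlin_apply]
  simp

lemma LPlin_X_pow_big (θ₁ θ₂ : ℝ) (m : ℕ) :
    LPlin F θ₁ θ₂ (X^(m+2))
      = Polynomial.C (1/2 : ℝ) * (X - X^2)
          * (Polynomial.C (((m:ℝ)+2) * ((m:ℝ)+1)) * phi F m)
        + Polynomial.C (1/2 : ℝ) * (Polynomial.C θ₁ - Polynomial.C (θ₁+θ₂) * X)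
          * (Polynomial.C ((m:ℝ)+2) * X^(m+1)) := by
  rw [LPlin_apply]
  have h1 : derivative (derivative ((X:ℝ[X])^(m+2)))
      = Polynomial.C (((m:ℝ)+2) * ((m:ℝ)+1)) * X^m := by
    rw [derivative_X_pow, derivative_C_mul, derivative_X_pow]
    rw [show m+2-1 = m+1 from rfl, show m+1-1 = m from rfl, ← mul_assoc, ← C_mul]
    push_cast
    ring_nf
  have h2 : derivative ((X:ℝ[X])^(m+2)) = Polynomial.C ((m:ℝ)+2) * X^(m+1) := by
    rw [derivative_X_pow]
    push_cast
    norm_num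
  rw [h1, h2, Ipoly_monomial]

lemma coeff_XsubX2_mul (q : Polynomial ℝ) (m : ℕ) :
    ((X - X^2) * q).coeff (m+2) = q.coeff (m+1) - q.coeff m := by
  rw [sub_mul, coeff_sub]
  congr 1
  · exact coeff_X_mul q (m+1)
  · exact coeff_X_pow_mul q 2 m

lemma LPlin_X_pow_degree (θ₁ θ₂ : ℝ) (k : ℕ) :
    (LPlin F θ₁ θ₂ (X^k)).degree ≤ (k : WithBot ℕ) := by
  match k with
  | 0 => rw [LPlin_X_pow_zero]; exact bot_le
  | 1 =>
    rw [LPlin_X_pow_one]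
    refine le_trans ?_ (le_of_eq (by norm_num : (1 : WithBot ℕ) = ((1:ℕ) : WithBot ℕ)))
    compute_degree
  | (m+2) =>
    rw [LPlin_X_pow_big]
    refine le_trans (degree_add_le _ _) (max_le ?_ ?_)
    · refine le_trans (degree_mul_le _ _) ?_
      have hA : (Polynomial.C (1/2 : ℝ) * (X - X^2)).degree ≤ (2 : WithBot ℕ) := by
        compute_degree
      have hB : (Polynomial.C (((m:ℝ)+2) * ((m:ℝ)+1)) * phi F m).degree ≤ (m : WithBot ℕ) := by
        refine le_trans (degree_mul_le _ _) ?_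
        refine le_trans (add_le_add degree_C_le (phi_degree m)) ?_
        rw [zero_add]
      refine le_trans (add_le_add hA hB) ?_
      rw [show ((m+2 : ℕ) : WithBot ℕ) = ((2:ℕ) : WithBot ℕ) + ((m:ℕ) : WithBot ℕ) from by
        rw [← Nat.cast_add]; norm_num [Nat.add_comm]]
      norm_num
    · refine le_trans (degree_mul_le _ _) ?_
      have hA : (Polynomial.C (1/2 : ℝ) * (Polynomial.C θ₁ - Polynomial.C (θ₁+θ₂) * X)).degree
          ≤ (1 : WithBot ℕ) := by compute_degree
      have hB : (Polynomial.C ((m:ℝ)+2) * X^(m+1)).degree ≤ ((m+1 : ℕ) : WithBot ℕ) :=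
        degree_C_mul_X_pow_le _ _
      refine le_trans (add_le_add hA hB) (le_of_eq ?_)
      rw [show (1 : WithBot ℕ) = ((1:ℕ) : WithBot ℕ) from by norm_num, ← Nat.cast_add]
      exact_mod_cast (by omega : 1+(m+1) = m+2)
lemma LPlin_X_pow_coeff (hF : F (Set.Icc (0:ℝ) 1)ᶜ = 0) (θ₁ θ₂ : ℝ) (k : ℕ) :
    (LPlin F θ₁ θ₂ (X^k)).coeff k = -(lam F θ₁ θ₂ k) := by
  match k with
  | 0 => rw [LPlin_X_pow_zero]; simp [lam]
  | 1 =>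
    rw [LPlin_X_pow_one]
    rw [coeff_C_mul, coeff_sub, coeff_C_mul, coeff_X_one]
    simp [lam]
    ring
  | (m+2) =>
    rw [LPlin_X_pow_big, coeff_add]
    have h1 : (Polynomial.C (1/2 : ℝ) * (X - X^2)
        * (Polynomial.C (((m:ℝ)+2) * ((m:ℝ)+1)) * phi F m)).coeff (m+2)
        = (1/2) * (((m:ℝ)+2) * ((m:ℝ)+1)) * (0 - expMom F m) := by
      rw [mul_assoc, coeff_C_mul, coeff_XsubX2_mul]
      rw [coeff_C_mul, coeff_C_mul]
      rw [phi_coeff_top hF m]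
      rw [coeff_eq_zero_of_degree_lt (lt_of_le_of_lt (phi_degree m)
        (by exact_mod_cast Nat.lt_succ_self m))]
      ring
    have h2 : (Polynomial.C (1/2 : ℝ) * (Polynomial.C θ₁ - Polynomial.C (θ₁+θ₂) * X)
        * (Polynomial.C ((m:ℝ)+2) * X^(m+1))).coeff (m+2)
        = (1/2) * (-((θ₁+θ₂) * ((m:ℝ)+2))) := by
      rw [mul_assoc, coeff_C_mul, sub_mul, coeff_sub]
      have ha : (Polynomial.C θ₁ * (Polynomial.C ((m:ℝ)+2) * X^(m+1))).coeff (m+2) = 0 := by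
        rw [← mul_assoc, ← C_mul, coeff_C_mul, coeff_X_pow, if_neg (by omega), mul_zero]
      have hb : (Polynomial.C (θ₁+θ₂) * X * (Polynomial.C ((m:ℝ)+2) * X^(m+1))).coeff (m+2)
          = (θ₁+θ₂) * ((m:ℝ)+2) := by
        rw [show Polynomial.C (θ₁+θ₂) * X * (Polynomial.C ((m:ℝ)+2) * X^(m+1))
            = Polynomial.C ((θ₁+θ₂) * ((m:ℝ)+2)) * (X * X^(m+1)) from by
          rw [C_mul]; ring]
        rw [coeff_C_mul]
        have hx := coeff_X_mul ((X : Polynomial ℝ)^(m+1)) (m+1)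
        rw [show (m+1)+1 = m+2 from rfl] at hx
        rw [hx, coeff_X_pow, if_pos rfl, mul_one]
      rw [ha, hb]
      ring
    rw [h1, h2, lam]
    have hc : ((m+2 : ℕ) : ℝ) = (m:ℝ)+2 := by push_cast; ring
    rw [hc, show (m+2) - 2 = m from rfl]
    ring

lemma LPlin_degree_le (θ₁ θ₂ : ℝ) (P : Polynomial ℝ) :
    (LPlin F θ₁ θ₂ P).degree ≤ P.degree := by
  rcases eq_or_ne P 0 with rfl | hP
  · simp
  · rw [degree_eq_natDegree hP]
    have h := P.as_sum_range
    rw [show LPlin F θ₁ θ₂ P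
        = LPlin F θ₁ θ₂ (∑ i ∈ Finset.range (P.natDegree+1), monomial i (P.coeff i)) from by
      rw [← h]]
    rw [map_sum]
    refine le_trans (degree_sum_le _ _) (Finset.sup_le fun i hi => ?_)
    rw [← C_mul_X_pow_eq_monomial, ← smul_eq_C_mul, LinearMap.map_smul]
    refine le_trans (degree_smul_le _ _) (le_trans (LPlin_X_pow_degree θ₁ θ₂ i) ?_)
    exact_mod_cast Nat.lt_succ_iff.mp (Finset.mem_range.mp hi)

lemma LPlin_coeff_natDegree (hF : F (Set.Icc (0:ℝ) 1)ᶜ = 0) (θ₁ θ₂ : ℝ) (P : Polynomial ℝ) :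
    (LPlin F θ₁ θ₂ P).coeff P.natDegree = -(lam F θ₁ θ₂ P.natDegree) * P.leadingCoeff := by
  have h := P.as_sum_range
  rw [show LPlin F θ₁ θ₂ P
      = LPlin F θ₁ θ₂ (∑ i ∈ Finset.range (P.natDegree+1), monomial i (P.coeff i)) from by
    rw [← h]]
  rw [map_sum, finset_sum_coeff]
  rw [Finset.sum_eq_single P.natDegree]
  · rw [← C_mul_X_pow_eq_monomial, ← smul_eq_C_mul, LinearMap.map_smul, coeff_smul,
      LPlin_X_pow_coeff hF θ₁ θ₂]
    rw [Polynomial.coeff_natDegree]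
    simp [mul_comm]
  · intro i hi hine
    have hilt : i < P.natDegree := by
      have := Finset.mem_range.mp hi; omega
    rw [← C_mul_X_pow_eq_monomial, ← smul_eq_C_mul, LinearMap.map_smul, coeff_smul]
    rw [coeff_eq_zero_of_degree_lt (lt_of_le_of_lt (LPlin_X_pow_degree θ₁ θ₂ i)
      (by exact_mod_cast hilt))]
    simp
  · intro hmem
    exact absurd (Finset.mem_range.mpr (Nat.lt_succ_self _)) hmem

noncomputable def mseq (F : Measure ℝ) (j : ℕ) : ℝ := (j:ℝ)*((j:ℝ)-1)*expMom F (j-2)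

lemma key_u (j : ℕ) (hj : 1 ≤ j) (y : ℝ) :
    ((j:ℝ)+1)*(j:ℝ) * (∫ u in Ioo (0:ℝ) 1, (1-u*y)^(j-1) * (2*u))
      - (j:ℝ)*((j:ℝ)-1) * (∫ u in Ioo (0:ℝ) 1, (1-u*y)^(j-2) * (2*u))
    = 2*(j:ℝ)*(1-y)^(j-1) := by
  have hG : ∀ t : ℝ, HasDerivAt (fun u : ℝ => 2*(j:ℝ)*(u^2*(1-u*y)^(j-1)))
      (((j:ℝ)+1)*(j:ℝ) * ((1-t*y)^(j-1) * (2*t))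
        - (j:ℝ)*((j:ℝ)-1) * ((1-t*y)^(j-2) * (2*t))) t := by
    intro t
    have h1 : HasDerivAt (fun u : ℝ => 1 - u*y) (-y) t := by
      simpa using ((hasDerivAt_id t).mul_const y).const_sub 1
    have h2 : HasDerivAt (fun u : ℝ => (1-u*y)^(j-1))
        (((j-1:ℕ):ℝ)*(1-t*y)^(j-1-1)*(-y)) t := h1.pow (j-1)
    have h3 : HasDerivAt (fun u : ℝ => u^2) (2*t) t := by
      simpa using hasDerivAt_pow 2 t
    have h4 := (h3.mul h2).const_mul (2*(j:ℝ))
    refine h4.congr_deriv ?_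
    match j, hj with
    | 1, _ => norm_num
    | (m+2), _ =>
      have e1 : m+2-1 = m+1 := rfl
      have e2 : m+2-2 = m := rfl
      have e3 : m+1-1 = m := rfl
      rw [e1, e2, e3]
      push_cast
      rw [pow_succ ((1:ℝ)-t*y) m]
      ring
  rw [← MeasureTheory.integral_const_mul, ← MeasureTheory.integral_const_mul,
    ← MeasureTheory.integral_sub ((intIoo (by fun_prop)).const_mul _)
      ((intIoo (by fun_prop)).const_mul _), int_Ioo_eq,
    intervalIntegral.integral_eq_sub_of_hasDerivAt (fun t _ => hG t)
      (Continuous.intervalIntegrable (by fun_prop) _ _)]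
  norm_num

lemma mseq_le_succ (hF : F (Set.Icc (0:ℝ) 1)ᶜ = 0) (j : ℕ) : mseq F j ≤ mseq F (j+1) := by
  rcases Nat.eq_zero_or_pos j with rfl | hj
  · unfold mseq; norm_num
  · have e1 : mseq F (j+1) = ((j:ℝ)+1)*(j:ℝ)*expMom F (j-1) := by
      unfold mseq
      rw [show (j+1)-2 = j-1 from by omega]
      push_cast
      ring
    have hkey : mseq F (j+1) - mseq F j = ∫ y, 2*(j:ℝ)*(1-y)^(j-1) ∂F := by
      rw [e1]
      unfold mseq
      rw [expMom, expMom]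
      rw [← MeasureTheory.integral_const_mul, ← MeasureTheory.integral_const_mul,
        ← MeasureTheory.integral_sub ((gInt hF (j-1)).const_mul _)
          ((gInt hF (j-2)).const_mul _)]
      refine MeasureTheory.integral_congr_ae (Filter.Eventually.of_forall fun y => ?_)
      exact key_u j hj y
    have hpos : 0 ≤ ∫ y, 2*(j:ℝ)*(1-y)^(j-1) ∂F := by
      refine MeasureTheory.integral_nonneg_of_ae ?_
      filter_upwards [aeIcc hF] with y hy
      have h1 : (0:ℝ) ≤ 1 - y := by linarith [hy.2]
      positivity
    linarith
lemma lam_lt (hF : F (Set.Icc (0:ℝ) 1)ᶜ = 0) {θ₁ θ₂ : ℝ} (hθ : 0 < θ₁ + θ₂)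
    {k n : ℕ} (h : k < n) : lam F θ₁ θ₂ k < lam F θ₁ θ₂ n := by
  have hm : Monotone (mseq F) := monotone_nat_of_le_succ (mseq_le_succ hF)
  have e : ∀ j : ℕ, lam F θ₁ θ₂ j = mseq F j / 2 + (j:ℝ)*(θ₁+θ₂)/2 := by
    intro j; unfold lam mseq; ring
  rw [e, e]
  have h1 := hm h.le
  have h2 : (k:ℝ) < (n:ℝ) := by exact_mod_cast h
  nlinarith

lemma eigen_exists (L : Polynomial ℝ →ₗ[ℝ] Polynomial ℝ) (lam : ℕ → ℝ) (n : ℕ)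
    (hdeg : ∀ Q, (L Q).degree ≤ Q.degree)
    (hcoeff : ∀ Q : Polynomial ℝ, (L Q).coeff Q.natDegree = -(lam Q.natDegree) * Q.leadingCoeff)
    (hlt : ∀ k, k < n → lam k < lam n) :
    ∃ P : Polynomial ℝ, P.natDegree = n ∧ L P = -(lam n) • P := by
  classical
  set T : Polynomial ℝ →ₗ[ℝ] Polynomial ℝ := L + lam n • LinearMap.id with hT
  have hTapp : ∀ Q : Polynomial ℝ, T Q = L Q + lam n • Q := by
    intro Q; simp [hT]
  have hTdeg : ∀ Q : Polynomial ℝ, (T Q).degree ≤ Q.degree := by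
    intro Q
    rw [hTapp]
    exact le_trans (degree_add_le _ _) (max_le (hdeg Q) (degree_smul_le _ _))
  have hmem : ∀ p ∈ degreeLT ℝ n, T p ∈ degreeLT ℝ n := fun p hp => by
    rw [Polynomial.mem_degreeLT] at *
    exact lt_of_le_of_lt (hTdeg p) hp
  have hfd : FiniteDimensional ℝ (degreeLT ℝ n) :=
    (Polynomial.degreeLTEquiv ℝ n).symm.finiteDimensional
  set Tres := T.restrict hmem with hTres
  have hker : ∀ q : degreeLT ℝ n, Tres q = 0 → q = 0 := by
    rintro ⟨Q, hQmem⟩ hq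
    have hTQ : T Q = 0 := by
      have := congrArg Subtype.val hq
      simpa [hTres, LinearMap.restrict_apply] using this
    by_contra hne
    have hQ0 : Q ≠ 0 := by simpa [Subtype.ext_iff] using hne
    have hd : Q.natDegree < n := by
      rw [Polynomial.mem_degreeLT] at hQmem
      exact (Polynomial.natDegree_lt_iff_degree_lt hQ0).mpr hQmem
    have hco : (T Q).coeff Q.natDegree
        = (lam n - lam Q.natDegree) * Q.leadingCoeff := by
      rw [hTapp, coeff_add, hcoeff Q, coeff_smul, Polynomial.coeff_natDegree, smul_eq_mul]
      ring
    rw [hTQ, coeff_zero] at hco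
    have hlc : Q.leadingCoeff ≠ 0 := leadingCoeff_ne_zero.mpr hQ0
    have hlam : lam n - lam Q.natDegree ≠ 0 := ne_of_gt (sub_pos.mpr (hlt _ hd))
    exact (mul_ne_zero hlam hlc) hco.symm
  have hinj : Function.Injective Tres :=
    LinearMap.ker_eq_bot.mp (LinearMap.ker_eq_bot'.mpr hker)
  have hsurj : Function.Surjective Tres := LinearMap.injective_iff_surjective.mp hinj
  -- the target: -(T (X^n)) lies in degreeLT n
  have hXnc : (T ((X:Polynomial ℝ)^n)).coeff n = 0 := by
    have h1 := hcoeff ((X:Polynomial ℝ)^n)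
    rw [natDegree_X_pow, leadingCoeff_X_pow] at h1
    rw [hTapp, coeff_add, h1, coeff_smul, coeff_X_pow, if_pos rfl]
    simp
  have hbmem : T ((X:Polynomial ℝ)^n) ∈ degreeLT ℝ n := by
    rw [Polynomial.mem_degreeLT, Polynomial.degree_lt_iff_coeff_zero]
    intro m hm
    rcases eq_or_lt_of_le hm with rfl | hmlt
    · exact hXnc
    · refine coeff_eq_zero_of_degree_lt (lt_of_le_of_lt (hTdeg _) ?_)
      rw [degree_X_pow]
      exact_mod_cast hmlt
  obtain ⟨⟨Q, hQmem⟩, hQ⟩ := hsurj ⟨-(T ((X:Polynomial ℝ)^n)), neg_mem hbmem⟩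
  have hTQ : T Q = -(T ((X:Polynomial ℝ)^n)) := by
    have := congrArg Subtype.val hQ
    simpa [hTres, LinearMap.restrict_apply] using this
  refine ⟨(X:Polynomial ℝ)^n + Q, ?_, ?_⟩
  · have hdQ : Q.degree < ((X:Polynomial ℝ)^n).degree := by
      rw [degree_X_pow]
      exact Polynomial.mem_degreeLT.mp hQmem
    have hdeq : ((X:Polynomial ℝ)^n + Q).degree = ((X:Polynomial ℝ)^n).degree :=
      degree_add_eq_left_of_degree_lt hdQ
    rw [degree_X_pow] at hdeq
    exact natDegree_eq_of_degree_eq_some hdeq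
  · have hTP : T ((X:Polynomial ℝ)^n + Q) = 0 := by
      rw [map_add, hTQ, add_neg_cancel]
    rw [hTapp] at hTP
    have := eq_neg_of_add_eq_zero_left hTP
    rw [this, neg_smul]

end Stmt10Aux

/-- for each `n ≥ 1` there is a polynomial eigenvector of degree exactly `n`
of the Λ-Fleming-Viot generator, with eigenvalue `-λ_n`, where
`λ_n = (n/2)((n-1) E[(1-W)^{n-2}] + θ)`. -/
theorem stmt10 (F : Measure ℝ) [IsProbabilityMeasure F]
    (hF : F (Set.Icc (0:ℝ) 1)ᶜ = 0)
    (θ₁ θ₂ : ℝ) (hθ₁ : 0 < θ₁) (hθ₂ : 0 < θ₂) :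
    ∀ n : ℕ, 1 ≤ n → ∃ P : Polynomial ℝ, P.natDegree = n ∧
      ∀ x ∈ Set.Icc (0:ℝ) 1,
        Lop F θ₁ θ₂ (fun t => Polynomial.eval t P) x
          = -(((n : ℝ) / 2) * (((n : ℝ) - 1) * expMom F (n - 2) + (θ₁ + θ₂))) *
              Polynomial.eval x P := by
  intro n hn
  have hθ : 0 < θ₁ + θ₂ := by linarith
  obtain ⟨P, hPdeg, hPeig⟩ := Stmt10Aux.eigen_exists (Stmt10Aux.LPlin F θ₁ θ₂)
    (Stmt10Aux.lam F θ₁ θ₂) n (Stmt10Aux.LPlin_degree_le θ₁ θ₂)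
    (Stmt10Aux.LPlin_coeff_natDegree hF θ₁ θ₂)
    (fun k hk => Stmt10Aux.lam_lt hF hθ hk)
  refine ⟨P, hPdeg, fun x hx => ?_⟩
  rw [Stmt10Aux.lop_eq hF θ₁ θ₂ P x, hPeig]
  rw [Polynomial.smul_eq_C_mul, Polynomial.eval_mul, Polynomial.eval_C]
  rfl
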